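/- In the QR decomposition H_eq = QR of the equivalent channel matrix of the 3D MIMO code, the fourth diagonal 4×4 block R_44 of R has the same zero pattern as R_11: ⟨q_13,h_14⟩ = ⟨q_13,h_16⟩ = ⟨q_14,h_15⟩ = ⟨q_15,h_16⟩ = 0. -/

import Mathlib

noncomputable section

open scoped InnerProductSpace

namespace MIMO3D

/-- The Golden-code parameter θ = (1+√5)/2. -/
def goldenTheta : ℝ := (1 + Real.sqrt 5) / 2

/-- θ̄ = 1 − θ. -/
def goldenThetaBar : ℝ := 1 - goldenTheta

/-- α = 1 + i(1−θ). -/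
def alpha : ℂ := 1 + Complex.I * (1 - (goldenTheta : ℂ))

/-- ᾱ = 1 + i(1−θ̄). -/
def alphaBar : ℂ := 1 + Complex.I * (1 - (goldenThetaBar : ℂ))

/-- The 3D MIMO codeword matrix X(s), a 4×4 complex matrix built from the
eight information symbols s₁,…,s₈ (here 0-indexed as `s 0`,…,`s 7`). -/
def codeword (s : Fin 8 → ℂ) : Matrix (Fin 4) (Fin 4) ℂ :=
  ((Real.sqrt 5 : ℂ))⁻¹ •
  !![alpha * (s 0 + (goldenTheta : ℂ) * s 1),
     alpha * (s 2 + (goldenTheta : ℂ) * s 3),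
     -(starRingEnd ℂ alpha) * (starRingEnd ℂ (s 4) + (goldenTheta : ℂ) * starRingEnd ℂ (s 5)),
     -(starRingEnd ℂ alpha) * (starRingEnd ℂ (s 6) + (goldenTheta : ℂ) * starRingEnd ℂ (s 7));
     Complex.I * alphaBar * (s 2 + (goldenThetaBar : ℂ) * s 3),
     alphaBar * (s 0 + (goldenThetaBar : ℂ) * s 1),
     Complex.I * (starRingEnd ℂ alphaBar) * (starRingEnd ℂ (s 6) + (goldenThetaBar : ℂ) * starRingEnd ℂ (s 7)),
     -(starRingEnd ℂ alphaBar) * (starRingEnd ℂ (s 4) + (goldenThetaBar : ℂ) * starRingEnd ℂ (s 5));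
     alpha * (s 4 + (goldenTheta : ℂ) * s 5),
     alpha * (s 6 + (goldenTheta : ℂ) * s 7),
     (starRingEnd ℂ alpha) * (starRingEnd ℂ (s 0) + (goldenTheta : ℂ) * starRingEnd ℂ (s 1)),
     (starRingEnd ℂ alpha) * (starRingEnd ℂ (s 2) + (goldenTheta : ℂ) * starRingEnd ℂ (s 3));
     Complex.I * alphaBar * (s 6 + (goldenThetaBar : ℂ) * s 7),
     alphaBar * (s 4 + (goldenThetaBar : ℂ) * s 5),
     -(Complex.I * (starRingEnd ℂ alphaBar) * (starRingEnd ℂ (s 2) + (goldenThetaBar : ℂ) * starRingEnd ℂ (s 3))),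
     (starRingEnd ℂ alphaBar) * (starRingEnd ℂ (s 0) + (goldenThetaBar : ℂ) * starRingEnd ℂ (s 1))]

/-- ṽ(Y): stack the columns of the 2×4 complex matrix Y into ℂ^8
(giving (Y₁₁,Y₂₁,Y₁₂,Y₂₂,Y₁₃,Y₂₃,Y₁₄,Y₂₄)) and replace each complex entry z
by the pair (Re z, Im z), producing a vector of ℝ^16 (Euclidean space). -/
def tildeVec (Y : Matrix (Fin 2) (Fin 4) ℂ) : EuclideanSpace ℝ (Fin 16) :=
  WithLp.toLp 2 fun (m : Fin 16) =>
    if m.val % 2 = 0 then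
      (Y ⟨m.val % 4 / 2, by omega⟩ ⟨m.val / 4, by have := m.isLt; omega⟩).re
    else
      (Y ⟨m.val % 4 / 2, by omega⟩ ⟨m.val / 4, by have := m.isLt; omega⟩).im

/-- Recover the complex symbol vector s ∈ ℂ^8 from its real coordinate vector
s̃ = (Re s₁, Im s₁, …, Re s₈, Im s₈) ∈ ℝ^16. -/
def sOfReal (v : Fin 16 → ℝ) : Fin 8 → ℂ :=
  fun k => (v ⟨2 * k.val, by have := k.isLt; omega⟩ : ℂ)
    + (v ⟨2 * k.val + 1, by have := k.isLt; omega⟩ : ℂ) * Complex.I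

/-- The j-th column h_j (0-indexed: `hcol H j` is h_{j+1} of the paper) of the
equivalent channel matrix H_eq: the image of the j-th standard basis vector of
ℝ^16 under the ℝ-linear map s̃ ↦ ṽ(H · X(s)). -/
def hcol (H : Matrix (Fin 2) (Fin 4) ℂ) (j : Fin 16) : EuclideanSpace ℝ (Fin 16) :=
  tildeVec (H * codeword (sOfReal (Pi.single j 1)))

/-- The Gram–Schmidt residual r_j (0-indexed) of the columns of H_eq:
r_j = h_j − Σ_{k<j} ⟨q_k, h_j⟩ q_k. -/
def rvec (H : Matrix (Fin 2) (Fin 4) ℂ) (j : Fin 16) : EuclideanSpace ℝ (Fin 16) :=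
  have : WellFoundedLT (Fin 16) := inferInstance
  InnerProductSpace.gramSchmidt ℝ (hcol H) j

/-- The Gram–Schmidt orthonormalization q_j = r_j / ‖r_j‖ (0-indexed). -/
def qvec (H : Matrix (Fin 2) (Fin 4) ℂ) (j : Fin 16) : EuclideanSpace ℝ (Fin 16) :=
  have : WellFoundedLT (Fin 16) := inferInstance
  InnerProductSpace.gramSchmidtNormed ℝ (hcol H) j

end MIMO3D

open MIMO3D

open InnerProductSpace

namespace MIMO3D

/-! ### Auxiliary algebraic facts -/

lemma theta_sq : goldenTheta ^ 2 = goldenTheta + 1 := by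
  have h5 : Real.sqrt 5 ^ 2 = 5 := Real.sq_sqrt (by norm_num)
  unfold goldenTheta; nlinarith [h5]

lemma sqrt5_eq : Real.sqrt 5 = 2 * goldenTheta - 1 := by unfold goldenTheta; ring

lemma sqrt5_pos : (0:ℝ) < Real.sqrt 5 := Real.sqrt_pos.mpr (by norm_num)

/-! ### The input-side symmetry on symbol vectors -/

def ksig (s : Fin 8 → ℂ) : Fin 8 → ℂ :=
  ![s 0 - 2*s 1, -2*s 0 - s 1, -s 2 + 2*s 3, 2*s 2 + s 3,
    s 4 - 2*s 5, -2*s 4 - s 5, -s 6 + 2*s 7, 2*s 6 + s 7]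

lemma ksig_0 (s : Fin 8 → ℂ) : ksig s 0 = s 0 - 2*s 1 := rfl
lemma ksig_1 (s : Fin 8 → ℂ) : ksig s 1 = -2*s 0 - s 1 := rfl
lemma ksig_2 (s : Fin 8 → ℂ) : ksig s 2 = -s 2 + 2*s 3 := rfl
lemma ksig_3 (s : Fin 8 → ℂ) : ksig s 3 = 2*s 2 + s 3 := rfl
lemma ksig_4 (s : Fin 8 → ℂ) : ksig s 4 = s 4 - 2*s 5 := rfl
lemma ksig_5 (s : Fin 8 → ℂ) : ksig s 5 = -2*s 4 - s 5 := rfl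
lemma ksig_6 (s : Fin 8 → ℂ) : ksig s 6 = -s 6 + 2*s 7 := rfl
lemma ksig_7 (s : Fin 8 → ℂ) : ksig s 7 = 2*s 6 + s 7 := rfl

/-! ### Codeword symmetries -/

lemma cwJ (s : Fin 8 → ℂ) :
    codeword (fun k => Complex.I * s k) =
      codeword s * Matrix.diagonal ![Complex.I, Complex.I, -Complex.I, -Complex.I] := by
  ext i j
  rw [Matrix.mul_diagonal]
  fin_cases i <;> fin_cases j <;>
    simp [codeword, goldenThetaBar, map_mul, Complex.conj_I, Matrix.smul_apply] <;> ring

lemma cwK (s : Fin 8 → ℂ) :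
    codeword (ksig s) = (Real.sqrt 5 : ℂ) •
      (codeword s * Matrix.diagonal ![(-1:ℂ), 1, -1, 1]) := by
  have hT : ((goldenTheta : ℝ) : ℂ)^2 = (goldenTheta : ℂ) + 1 := by
    rw [← Complex.ofReal_pow, theta_sq]; push_cast; ring
  have h5 : ((Real.sqrt 5 : ℝ) : ℂ) = 2*(goldenTheta : ℂ) - 1 := by
    rw [sqrt5_eq]; push_cast; ring
  have hne : (2*(goldenTheta : ℂ) - 1) ≠ 0 := by
    rw [← h5]; simp only [ne_eq, Complex.ofReal_eq_zero]
    exact ne_of_gt sqrt5_pos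
  have hinv : (2*(goldenTheta : ℂ) - 1)⁻¹ = (2*(goldenTheta : ℂ) - 1)/5 := by
    rw [eq_div_iff (by norm_num : (5:ℂ) ≠ 0), inv_mul_eq_iff_eq_mul₀ hne]
    linear_combination -4 * hT
  ext i j
  rw [Matrix.smul_apply, Matrix.mul_diagonal, h5]
  fin_cases i <;> fin_cases j <;>
    simp [codeword, ksig_0, ksig_1, ksig_2, ksig_3, ksig_4, ksig_5, ksig_6, ksig_7,
      alpha, alphaBar, goldenThetaBar, h5, hinv,
      Matrix.smul_apply, map_sub, map_add, map_mul, map_neg, map_ofNat,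
      Complex.conj_ofReal, Complex.conj_I, smul_eq_mul, Complex.ofReal_sub,
      Complex.ofReal_one]
  · linear_combination (0:ℂ) * Complex.I_sq + ((-2/5 : ℂ)*(s 1) + (4/5 : ℂ)*(goldenTheta:ℂ)*(s 1) + (-2/5 : ℂ)*Complex.I*(s 1) + (6/5 : ℂ)*Complex.I*(goldenTheta:ℂ)*(s 1) + (-4/5 : ℂ)*Complex.I*(goldenTheta:ℂ)^2*(s 1)) * hT
  · linear_combination (0:ℂ) * Complex.I_sq + ((2/5 : ℂ)*(s 3) + (-4/5 : ℂ)*(goldenTheta:ℂ)*(s 3) + (2/5 : ℂ)*Complex.I*(s 3) + (-6/5 : ℂ)*Complex.I*(goldenTheta:ℂ)*(s 3) + (4/5 : ℂ)*Complex.I*(goldenTheta:ℂ)^2*(s 3)) * hT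
  · linear_combination (0:ℂ) * Complex.I_sq + ((2/5 : ℂ)*((starRingEnd ℂ) (s 5)) + (-4/5 : ℂ)*(goldenTheta:ℂ)*((starRingEnd ℂ) (s 5)) + (-2/5 : ℂ)*Complex.I*((starRingEnd ℂ) (s 5)) + (6/5 : ℂ)*Complex.I*(goldenTheta:ℂ)*((starRingEnd ℂ) (s 5)) + (-4/5 : ℂ)*Complex.I*(goldenTheta:ℂ)^2*((starRingEnd ℂ) (s 5))) * hT
  · linear_combination (0:ℂ) * Complex.I_sq + ((-2/5 : ℂ)*((starRingEnd ℂ) (s 7)) + (4/5 : ℂ)*(goldenTheta:ℂ)*((starRingEnd ℂ) (s 7)) + (2/5 : ℂ)*Complex.I*((starRingEnd ℂ) (s 7)) + (-6/5 : ℂ)*Complex.I*(goldenTheta:ℂ)*((starRingEnd ℂ) (s 7)) + (4/5 : ℂ)*Complex.I*(goldenTheta:ℂ)^2*((starRingEnd ℂ) (s 7))) * hT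
  · linear_combination ((-2/5 : ℂ)*(goldenTheta:ℂ)*(s 3) + (2/5 : ℂ)*(goldenTheta:ℂ)^2*(s 3) + (6/5 : ℂ)*(goldenTheta:ℂ)^3*(s 3) + (-4/5 : ℂ)*(goldenTheta:ℂ)^4*(s 3)) * Complex.I_sq + ((-2/5 : ℂ)*(goldenTheta:ℂ)*(s 3) + (4/5 : ℂ)*(goldenTheta:ℂ)^2*(s 3) + (2/5 : ℂ)*Complex.I*(s 3) + (-4/5 : ℂ)*Complex.I*(goldenTheta:ℂ)*(s 3)) * hT
  · linear_combination (0:ℂ) * Complex.I_sq + ((-2/5 : ℂ)*(s 1) + (4/5 : ℂ)*(goldenTheta:ℂ)*(s 1) + (-2/5 : ℂ)*Complex.I*(goldenTheta:ℂ)*(s 1) + (4/5 : ℂ)*Complex.I*(goldenTheta:ℂ)^2*(s 1)) * hT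
  · linear_combination ((2/5 : ℂ)*(goldenTheta:ℂ)*((starRingEnd ℂ) (s 7)) + (-2/5 : ℂ)*(goldenTheta:ℂ)^2*((starRingEnd ℂ) (s 7)) + (-6/5 : ℂ)*(goldenTheta:ℂ)^3*((starRingEnd ℂ) (s 7)) + (4/5 : ℂ)*(goldenTheta:ℂ)^4*((starRingEnd ℂ) (s 7))) * Complex.I_sq + ((2/5 : ℂ)*(goldenTheta:ℂ)*((starRingEnd ℂ) (s 7)) + (-4/5 : ℂ)*(goldenTheta:ℂ)^2*((starRingEnd ℂ) (s 7)) + (2/5 : ℂ)*Complex.I*((starRingEnd ℂ) (s 7)) + (-4/5 : ℂ)*Complex.I*(goldenTheta:ℂ)*((starRingEnd ℂ) (s 7))) * hT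
  · linear_combination (0:ℂ) * Complex.I_sq + ((2/5 : ℂ)*((starRingEnd ℂ) (s 5)) + (-4/5 : ℂ)*(goldenTheta:ℂ)*((starRingEnd ℂ) (s 5)) + (-2/5 : ℂ)*Complex.I*(goldenTheta:ℂ)*((starRingEnd ℂ) (s 5)) + (4/5 : ℂ)*Complex.I*(goldenTheta:ℂ)^2*((starRingEnd ℂ) (s 5))) * hT
  · linear_combination (0:ℂ) * Complex.I_sq + ((-2/5 : ℂ)*(s 5) + (4/5 : ℂ)*(goldenTheta:ℂ)*(s 5) + (-2/5 : ℂ)*Complex.I*(s 5) + (6/5 : ℂ)*Complex.I*(goldenTheta:ℂ)*(s 5) + (-4/5 : ℂ)*Complex.I*(goldenTheta:ℂ)^2*(s 5)) * hT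
  · linear_combination (0:ℂ) * Complex.I_sq + ((2/5 : ℂ)*(s 7) + (-4/5 : ℂ)*(goldenTheta:ℂ)*(s 7) + (2/5 : ℂ)*Complex.I*(s 7) + (-6/5 : ℂ)*Complex.I*(goldenTheta:ℂ)*(s 7) + (4/5 : ℂ)*Complex.I*(goldenTheta:ℂ)^2*(s 7)) * hT
  · linear_combination (0:ℂ) * Complex.I_sq + ((-2/5 : ℂ)*((starRingEnd ℂ) (s 1)) + (4/5 : ℂ)*(goldenTheta:ℂ)*((starRingEnd ℂ) (s 1)) + (2/5 : ℂ)*Complex.I*((starRingEnd ℂ) (s 1)) + (-6/5 : ℂ)*Complex.I*(goldenTheta:ℂ)*((starRingEnd ℂ) (s 1)) + (4/5 : ℂ)*Complex.I*(goldenTheta:ℂ)^2*((starRingEnd ℂ) (s 1))) * hT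
  · linear_combination (0:ℂ) * Complex.I_sq + ((2/5 : ℂ)*((starRingEnd ℂ) (s 3)) + (-4/5 : ℂ)*(goldenTheta:ℂ)*((starRingEnd ℂ) (s 3)) + (-2/5 : ℂ)*Complex.I*((starRingEnd ℂ) (s 3)) + (6/5 : ℂ)*Complex.I*(goldenTheta:ℂ)*((starRingEnd ℂ) (s 3)) + (-4/5 : ℂ)*Complex.I*(goldenTheta:ℂ)^2*((starRingEnd ℂ) (s 3))) * hT
  · linear_combination ((-2/5 : ℂ)*(goldenTheta:ℂ)*(s 7) + (2/5 : ℂ)*(goldenTheta:ℂ)^2*(s 7) + (6/5 : ℂ)*(goldenTheta:ℂ)^3*(s 7) + (-4/5 : ℂ)*(goldenTheta:ℂ)^4*(s 7)) * Complex.I_sq + ((-2/5 : ℂ)*(goldenTheta:ℂ)*(s 7) + (4/5 : ℂ)*(goldenTheta:ℂ)^2*(s 7) + (2/5 : ℂ)*Complex.I*(s 7) + (-4/5 : ℂ)*Complex.I*(goldenTheta:ℂ)*(s 7)) * hT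
  · linear_combination (0:ℂ) * Complex.I_sq + ((-2/5 : ℂ)*(s 5) + (4/5 : ℂ)*(goldenTheta:ℂ)*(s 5) + (-2/5 : ℂ)*Complex.I*(goldenTheta:ℂ)*(s 5) + (4/5 : ℂ)*Complex.I*(goldenTheta:ℂ)^2*(s 5)) * hT
  · linear_combination ((-2/5 : ℂ)*(goldenTheta:ℂ)*((starRingEnd ℂ) (s 3)) + (2/5 : ℂ)*(goldenTheta:ℂ)^2*((starRingEnd ℂ) (s 3)) + (6/5 : ℂ)*(goldenTheta:ℂ)^3*((starRingEnd ℂ) (s 3)) + (-4/5 : ℂ)*(goldenTheta:ℂ)^4*((starRingEnd ℂ) (s 3))) * Complex.I_sq + ((-2/5 : ℂ)*(goldenTheta:ℂ)*((starRingEnd ℂ) (s 3)) + (4/5 : ℂ)*(goldenTheta:ℂ)^2*((starRingEnd ℂ) (s 3)) + (-2/5 : ℂ)*Complex.I*((starRingEnd ℂ) (s 3)) + (4/5 : ℂ)*Complex.I*(goldenTheta:ℂ)*((starRingEnd ℂ) (s 3))) * hT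
  · linear_combination (0:ℂ) * Complex.I_sq + ((-2/5 : ℂ)*((starRingEnd ℂ) (s 1)) + (4/5 : ℂ)*(goldenTheta:ℂ)*((starRingEnd ℂ) (s 1)) + (2/5 : ℂ)*Complex.I*(goldenTheta:ℂ)*((starRingEnd ℂ) (s 1)) + (-4/5 : ℂ)*Complex.I*(goldenTheta:ℂ)^2*((starRingEnd ℂ) (s 1))) * hT

def jinv : (Fin 16 → ℝ) → (Fin 16 → ℝ) := fun v => ![-v 1, v 0, -v 3, v 2, -v 5, v 4, -v 7, v 6, -v 9, v 8, -v 11, v 10, -v 13, v 12, -v 15, v 14]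
def kinv : (Fin 16 → ℝ) → (Fin 16 → ℝ) := fun v => ![v 0 - 2*v 2, v 1 - 2*v 3, -2*v 0 - v 2, -2*v 1 - v 3, -v 4 + 2*v 6, -v 5 + 2*v 7, 2*v 4 + v 6, 2*v 5 + v 7, v 8 - 2*v 10, v 9 - 2*v 11, -2*v 8 - v 10, -2*v 9 - v 11, -v 12 + 2*v 14, -v 13 + 2*v 15, 2*v 12 + v 14, 2*v 13 + v 15]
def Jf : EuclideanSpace ℝ (Fin 16) → EuclideanSpace ℝ (Fin 16) := fun y => WithLp.toLp 2 ![-y 1, y 0, -y 3, y 2, -y 5, y 4, -y 7, y 6, y 9, -y 8, y 11, -y 10, y 13, -y 12, y 15, -y 14]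
def Kf : EuclideanSpace ℝ (Fin 16) → EuclideanSpace ℝ (Fin 16) := fun y => WithLp.toLp 2 ![-y 0, -y 1, -y 2, -y 3, y 4, y 5, y 6, y 7, -y 8, -y 9, -y 10, -y 11, y 12, y 13, y 14, y 15]
def jp : Fin 16 → Fin 16 := ![1, 0, 3, 2, 5, 4, 7, 6, 9, 8, 11, 10, 13, 12, 15, 14]
def jc : Fin 16 → ℝ := ![1, -1, 1, -1, 1, -1, 1, -1, 1, -1, 1, -1, 1, -1, 1, -1]
def kp : Fin 16 → Fin 16 := ![2, 3, 0, 1, 6, 7, 4, 5, 10, 11, 8, 9, 14, 15, 12, 13]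
def kc1 : Fin 16 → ℝ := ![1, 1, -1, -1, -1, -1, 1, 1, 1, 1, -1, -1, -1, -1, 1, 1]
def kc2 : Fin 16 → ℝ := ![-2, -2, -2, -2, 2, 2, 2, 2, -2, -2, -2, -2, 2, 2, 2, 2]
@[simp] lemma jinv_ap_0 (v : Fin 16 → ℝ) : jinv v 0 = -v 1 := rfl
@[simp] lemma jinv_ap_1 (v : Fin 16 → ℝ) : jinv v 1 = v 0 := rfl
@[simp] lemma jinv_ap_2 (v : Fin 16 → ℝ) : jinv v 2 = -v 3 := rfl
@[simp] lemma jinv_ap_3 (v : Fin 16 → ℝ) : jinv v 3 = v 2 := rfl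
@[simp] lemma jinv_ap_4 (v : Fin 16 → ℝ) : jinv v 4 = -v 5 := rfl
@[simp] lemma jinv_ap_5 (v : Fin 16 → ℝ) : jinv v 5 = v 4 := rfl
@[simp] lemma jinv_ap_6 (v : Fin 16 → ℝ) : jinv v 6 = -v 7 := rfl
@[simp] lemma jinv_ap_7 (v : Fin 16 → ℝ) : jinv v 7 = v 6 := rfl
@[simp] lemma jinv_ap_8 (v : Fin 16 → ℝ) : jinv v 8 = -v 9 := rfl
@[simp] lemma jinv_ap_9 (v : Fin 16 → ℝ) : jinv v 9 = v 8 := rfl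
@[simp] lemma jinv_ap_10 (v : Fin 16 → ℝ) : jinv v 10 = -v 11 := rfl
@[simp] lemma jinv_ap_11 (v : Fin 16 → ℝ) : jinv v 11 = v 10 := rfl
@[simp] lemma jinv_ap_12 (v : Fin 16 → ℝ) : jinv v 12 = -v 13 := rfl
@[simp] lemma jinv_ap_13 (v : Fin 16 → ℝ) : jinv v 13 = v 12 := rfl
@[simp] lemma jinv_ap_14 (v : Fin 16 → ℝ) : jinv v 14 = -v 15 := rfl
@[simp] lemma jinv_ap_15 (v : Fin 16 → ℝ) : jinv v 15 = v 14 := rfl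
@[simp] lemma kinv_ap_0 (v : Fin 16 → ℝ) : kinv v 0 = v 0 - 2*v 2 := rfl
@[simp] lemma kinv_ap_1 (v : Fin 16 → ℝ) : kinv v 1 = v 1 - 2*v 3 := rfl
@[simp] lemma kinv_ap_2 (v : Fin 16 → ℝ) : kinv v 2 = -2*v 0 - v 2 := rfl
@[simp] lemma kinv_ap_3 (v : Fin 16 → ℝ) : kinv v 3 = -2*v 1 - v 3 := rfl
@[simp] lemma kinv_ap_4 (v : Fin 16 → ℝ) : kinv v 4 = -v 4 + 2*v 6 := rfl
@[simp] lemma kinv_ap_5 (v : Fin 16 → ℝ) : kinv v 5 = -v 5 + 2*v 7 := rfl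
@[simp] lemma kinv_ap_6 (v : Fin 16 → ℝ) : kinv v 6 = 2*v 4 + v 6 := rfl
@[simp] lemma kinv_ap_7 (v : Fin 16 → ℝ) : kinv v 7 = 2*v 5 + v 7 := rfl
@[simp] lemma kinv_ap_8 (v : Fin 16 → ℝ) : kinv v 8 = v 8 - 2*v 10 := rfl
@[simp] lemma kinv_ap_9 (v : Fin 16 → ℝ) : kinv v 9 = v 9 - 2*v 11 := rfl
@[simp] lemma kinv_ap_10 (v : Fin 16 → ℝ) : kinv v 10 = -2*v 8 - v 10 := rfl
@[simp] lemma kinv_ap_11 (v : Fin 16 → ℝ) : kinv v 11 = -2*v 9 - v 11 := rfl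
@[simp] lemma kinv_ap_12 (v : Fin 16 → ℝ) : kinv v 12 = -v 12 + 2*v 14 := rfl
@[simp] lemma kinv_ap_13 (v : Fin 16 → ℝ) : kinv v 13 = -v 13 + 2*v 15 := rfl
@[simp] lemma kinv_ap_14 (v : Fin 16 → ℝ) : kinv v 14 = 2*v 12 + v 14 := rfl
@[simp] lemma kinv_ap_15 (v : Fin 16 → ℝ) : kinv v 15 = 2*v 13 + v 15 := rfl
@[simp] lemma Jf_ap_0 (y : EuclideanSpace ℝ (Fin 16)) : Jf y 0 = -y 1 := rfl
@[simp] lemma Jf_ap_1 (y : EuclideanSpace ℝ (Fin 16)) : Jf y 1 = y 0 := rfl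
@[simp] lemma Jf_ap_2 (y : EuclideanSpace ℝ (Fin 16)) : Jf y 2 = -y 3 := rfl
@[simp] lemma Jf_ap_3 (y : EuclideanSpace ℝ (Fin 16)) : Jf y 3 = y 2 := rfl
@[simp] lemma Jf_ap_4 (y : EuclideanSpace ℝ (Fin 16)) : Jf y 4 = -y 5 := rfl
@[simp] lemma Jf_ap_5 (y : EuclideanSpace ℝ (Fin 16)) : Jf y 5 = y 4 := rfl
@[simp] lemma Jf_ap_6 (y : EuclideanSpace ℝ (Fin 16)) : Jf y 6 = -y 7 := rfl
@[simp] lemma Jf_ap_7 (y : EuclideanSpace ℝ (Fin 16)) : Jf y 7 = y 6 := rfl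
@[simp] lemma Jf_ap_8 (y : EuclideanSpace ℝ (Fin 16)) : Jf y 8 = y 9 := rfl
@[simp] lemma Jf_ap_9 (y : EuclideanSpace ℝ (Fin 16)) : Jf y 9 = -y 8 := rfl
@[simp] lemma Jf_ap_10 (y : EuclideanSpace ℝ (Fin 16)) : Jf y 10 = y 11 := rfl
@[simp] lemma Jf_ap_11 (y : EuclideanSpace ℝ (Fin 16)) : Jf y 11 = -y 10 := rfl
@[simp] lemma Jf_ap_12 (y : EuclideanSpace ℝ (Fin 16)) : Jf y 12 = y 13 := rfl
@[simp] lemma Jf_ap_13 (y : EuclideanSpace ℝ (Fin 16)) : Jf y 13 = -y 12 := rfl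
@[simp] lemma Jf_ap_14 (y : EuclideanSpace ℝ (Fin 16)) : Jf y 14 = y 15 := rfl
@[simp] lemma Jf_ap_15 (y : EuclideanSpace ℝ (Fin 16)) : Jf y 15 = -y 14 := rfl
@[simp] lemma Kf_ap_0 (y : EuclideanSpace ℝ (Fin 16)) : Kf y 0 = -y 0 := rfl
@[simp] lemma Kf_ap_1 (y : EuclideanSpace ℝ (Fin 16)) : Kf y 1 = -y 1 := rfl
@[simp] lemma Kf_ap_2 (y : EuclideanSpace ℝ (Fin 16)) : Kf y 2 = -y 2 := rfl
@[simp] lemma Kf_ap_3 (y : EuclideanSpace ℝ (Fin 16)) : Kf y 3 = -y 3 := rfl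
@[simp] lemma Kf_ap_4 (y : EuclideanSpace ℝ (Fin 16)) : Kf y 4 = y 4 := rfl
@[simp] lemma Kf_ap_5 (y : EuclideanSpace ℝ (Fin 16)) : Kf y 5 = y 5 := rfl
@[simp] lemma Kf_ap_6 (y : EuclideanSpace ℝ (Fin 16)) : Kf y 6 = y 6 := rfl
@[simp] lemma Kf_ap_7 (y : EuclideanSpace ℝ (Fin 16)) : Kf y 7 = y 7 := rfl
@[simp] lemma Kf_ap_8 (y : EuclideanSpace ℝ (Fin 16)) : Kf y 8 = -y 8 := rfl
@[simp] lemma Kf_ap_9 (y : EuclideanSpace ℝ (Fin 16)) : Kf y 9 = -y 9 := rfl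
@[simp] lemma Kf_ap_10 (y : EuclideanSpace ℝ (Fin 16)) : Kf y 10 = -y 10 := rfl
@[simp] lemma Kf_ap_11 (y : EuclideanSpace ℝ (Fin 16)) : Kf y 11 = -y 11 := rfl
@[simp] lemma Kf_ap_12 (y : EuclideanSpace ℝ (Fin 16)) : Kf y 12 = y 12 := rfl
@[simp] lemma Kf_ap_13 (y : EuclideanSpace ℝ (Fin 16)) : Kf y 13 = y 13 := rfl
@[simp] lemma Kf_ap_14 (y : EuclideanSpace ℝ (Fin 16)) : Kf y 14 = y 14 := rfl
@[simp] lemma Kf_ap_15 (y : EuclideanSpace ℝ (Fin 16)) : Kf y 15 = y 15 := rfl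
@[simp] lemma jp_ap_0 : jp 0 = (1 : Fin 16) := rfl
@[simp] lemma jp_ap_1 : jp 1 = (0 : Fin 16) := rfl
@[simp] lemma jp_ap_2 : jp 2 = (3 : Fin 16) := rfl
@[simp] lemma jp_ap_3 : jp 3 = (2 : Fin 16) := rfl
@[simp] lemma jp_ap_4 : jp 4 = (5 : Fin 16) := rfl
@[simp] lemma jp_ap_5 : jp 5 = (4 : Fin 16) := rfl
@[simp] lemma jp_ap_6 : jp 6 = (7 : Fin 16) := rfl
@[simp] lemma jp_ap_7 : jp 7 = (6 : Fin 16) := rfl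
@[simp] lemma jp_ap_8 : jp 8 = (9 : Fin 16) := rfl
@[simp] lemma jp_ap_9 : jp 9 = (8 : Fin 16) := rfl
@[simp] lemma jp_ap_10 : jp 10 = (11 : Fin 16) := rfl
@[simp] lemma jp_ap_11 : jp 11 = (10 : Fin 16) := rfl
@[simp] lemma jp_ap_12 : jp 12 = (13 : Fin 16) := rfl
@[simp] lemma jp_ap_13 : jp 13 = (12 : Fin 16) := rfl
@[simp] lemma jp_ap_14 : jp 14 = (15 : Fin 16) := rfl
@[simp] lemma jp_ap_15 : jp 15 = (14 : Fin 16) := rfl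
@[simp] lemma jc_ap_0 : jc 0 = (1 : ℝ) := rfl
@[simp] lemma jc_ap_1 : jc 1 = (-1 : ℝ) := rfl
@[simp] lemma jc_ap_2 : jc 2 = (1 : ℝ) := rfl
@[simp] lemma jc_ap_3 : jc 3 = (-1 : ℝ) := rfl
@[simp] lemma jc_ap_4 : jc 4 = (1 : ℝ) := rfl
@[simp] lemma jc_ap_5 : jc 5 = (-1 : ℝ) := rfl
@[simp] lemma jc_ap_6 : jc 6 = (1 : ℝ) := rfl
@[simp] lemma jc_ap_7 : jc 7 = (-1 : ℝ) := rfl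
@[simp] lemma jc_ap_8 : jc 8 = (1 : ℝ) := rfl
@[simp] lemma jc_ap_9 : jc 9 = (-1 : ℝ) := rfl
@[simp] lemma jc_ap_10 : jc 10 = (1 : ℝ) := rfl
@[simp] lemma jc_ap_11 : jc 11 = (-1 : ℝ) := rfl
@[simp] lemma jc_ap_12 : jc 12 = (1 : ℝ) := rfl
@[simp] lemma jc_ap_13 : jc 13 = (-1 : ℝ) := rfl
@[simp] lemma jc_ap_14 : jc 14 = (1 : ℝ) := rfl
@[simp] lemma jc_ap_15 : jc 15 = (-1 : ℝ) := rfl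
@[simp] lemma kp_ap_0 : kp 0 = (2 : Fin 16) := rfl
@[simp] lemma kp_ap_1 : kp 1 = (3 : Fin 16) := rfl
@[simp] lemma kp_ap_2 : kp 2 = (0 : Fin 16) := rfl
@[simp] lemma kp_ap_3 : kp 3 = (1 : Fin 16) := rfl
@[simp] lemma kp_ap_4 : kp 4 = (6 : Fin 16) := rfl
@[simp] lemma kp_ap_5 : kp 5 = (7 : Fin 16) := rfl
@[simp] lemma kp_ap_6 : kp 6 = (4 : Fin 16) := rfl
@[simp] lemma kp_ap_7 : kp 7 = (5 : Fin 16) := rfl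
@[simp] lemma kp_ap_8 : kp 8 = (10 : Fin 16) := rfl
@[simp] lemma kp_ap_9 : kp 9 = (11 : Fin 16) := rfl
@[simp] lemma kp_ap_10 : kp 10 = (8 : Fin 16) := rfl
@[simp] lemma kp_ap_11 : kp 11 = (9 : Fin 16) := rfl
@[simp] lemma kp_ap_12 : kp 12 = (14 : Fin 16) := rfl
@[simp] lemma kp_ap_13 : kp 13 = (15 : Fin 16) := rfl
@[simp] lemma kp_ap_14 : kp 14 = (12 : Fin 16) := rfl
@[simp] lemma kp_ap_15 : kp 15 = (13 : Fin 16) := rfl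
@[simp] lemma kc1_ap_0 : kc1 0 = (1 : ℝ) := rfl
@[simp] lemma kc1_ap_1 : kc1 1 = (1 : ℝ) := rfl
@[simp] lemma kc1_ap_2 : kc1 2 = (-1 : ℝ) := rfl
@[simp] lemma kc1_ap_3 : kc1 3 = (-1 : ℝ) := rfl
@[simp] lemma kc1_ap_4 : kc1 4 = (-1 : ℝ) := rfl
@[simp] lemma kc1_ap_5 : kc1 5 = (-1 : ℝ) := rfl
@[simp] lemma kc1_ap_6 : kc1 6 = (1 : ℝ) := rfl
@[simp] lemma kc1_ap_7 : kc1 7 = (1 : ℝ) := rfl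
@[simp] lemma kc1_ap_8 : kc1 8 = (1 : ℝ) := rfl
@[simp] lemma kc1_ap_9 : kc1 9 = (1 : ℝ) := rfl
@[simp] lemma kc1_ap_10 : kc1 10 = (-1 : ℝ) := rfl
@[simp] lemma kc1_ap_11 : kc1 11 = (-1 : ℝ) := rfl
@[simp] lemma kc1_ap_12 : kc1 12 = (-1 : ℝ) := rfl
@[simp] lemma kc1_ap_13 : kc1 13 = (-1 : ℝ) := rfl
@[simp] lemma kc1_ap_14 : kc1 14 = (1 : ℝ) := rfl
@[simp] lemma kc1_ap_15 : kc1 15 = (1 : ℝ) := rfl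
@[simp] lemma kc2_ap_0 : kc2 0 = (-2 : ℝ) := rfl
@[simp] lemma kc2_ap_1 : kc2 1 = (-2 : ℝ) := rfl
@[simp] lemma kc2_ap_2 : kc2 2 = (-2 : ℝ) := rfl
@[simp] lemma kc2_ap_3 : kc2 3 = (-2 : ℝ) := rfl
@[simp] lemma kc2_ap_4 : kc2 4 = (2 : ℝ) := rfl
@[simp] lemma kc2_ap_5 : kc2 5 = (2 : ℝ) := rfl
@[simp] lemma kc2_ap_6 : kc2 6 = (2 : ℝ) := rfl
@[simp] lemma kc2_ap_7 : kc2 7 = (2 : ℝ) := rfl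
@[simp] lemma kc2_ap_8 : kc2 8 = (-2 : ℝ) := rfl
@[simp] lemma kc2_ap_9 : kc2 9 = (-2 : ℝ) := rfl
@[simp] lemma kc2_ap_10 : kc2 10 = (-2 : ℝ) := rfl
@[simp] lemma kc2_ap_11 : kc2 11 = (-2 : ℝ) := rfl
@[simp] lemma kc2_ap_12 : kc2 12 = (2 : ℝ) := rfl
@[simp] lemma kc2_ap_13 : kc2 13 = (2 : ℝ) := rfl
@[simp] lemma kc2_ap_14 : kc2 14 = (2 : ℝ) := rfl
@[simp] lemma kc2_ap_15 : kc2 15 = (2 : ℝ) := rfl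
lemma sOfReal_ap_0 (v : Fin 16 → ℝ) : sOfReal v 0 = (v 0 : ℂ) + (v 1 : ℂ) * Complex.I := rfl
lemma sOfReal_ap_1 (v : Fin 16 → ℝ) : sOfReal v 1 = (v 2 : ℂ) + (v 3 : ℂ) * Complex.I := rfl
lemma sOfReal_ap_2 (v : Fin 16 → ℝ) : sOfReal v 2 = (v 4 : ℂ) + (v 5 : ℂ) * Complex.I := rfl
lemma sOfReal_ap_3 (v : Fin 16 → ℝ) : sOfReal v 3 = (v 6 : ℂ) + (v 7 : ℂ) * Complex.I := rfl
lemma sOfReal_ap_4 (v : Fin 16 → ℝ) : sOfReal v 4 = (v 8 : ℂ) + (v 9 : ℂ) * Complex.I := rfl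
lemma sOfReal_ap_5 (v : Fin 16 → ℝ) : sOfReal v 5 = (v 10 : ℂ) + (v 11 : ℂ) * Complex.I := rfl
lemma sOfReal_ap_6 (v : Fin 16 → ℝ) : sOfReal v 6 = (v 12 : ℂ) + (v 13 : ℂ) * Complex.I := rfl
lemma sOfReal_ap_7 (v : Fin 16 → ℝ) : sOfReal v 7 = (v 14 : ℂ) + (v 15 : ℂ) * Complex.I := rfl


lemma tildeVec_ap_0 (Y : Matrix (Fin 2) (Fin 4) ℂ) : tildeVec Y 0 = (Y 0 0).re := rfl
lemma tildeVec_ap_1 (Y : Matrix (Fin 2) (Fin 4) ℂ) : tildeVec Y 1 = (Y 0 0).im := rfl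
lemma tildeVec_ap_2 (Y : Matrix (Fin 2) (Fin 4) ℂ) : tildeVec Y 2 = (Y 1 0).re := rfl
lemma tildeVec_ap_3 (Y : Matrix (Fin 2) (Fin 4) ℂ) : tildeVec Y 3 = (Y 1 0).im := rfl
lemma tildeVec_ap_4 (Y : Matrix (Fin 2) (Fin 4) ℂ) : tildeVec Y 4 = (Y 0 1).re := rfl
lemma tildeVec_ap_5 (Y : Matrix (Fin 2) (Fin 4) ℂ) : tildeVec Y 5 = (Y 0 1).im := rfl
lemma tildeVec_ap_6 (Y : Matrix (Fin 2) (Fin 4) ℂ) : tildeVec Y 6 = (Y 1 1).re := rfl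
lemma tildeVec_ap_7 (Y : Matrix (Fin 2) (Fin 4) ℂ) : tildeVec Y 7 = (Y 1 1).im := rfl
lemma tildeVec_ap_8 (Y : Matrix (Fin 2) (Fin 4) ℂ) : tildeVec Y 8 = (Y 0 2).re := rfl
lemma tildeVec_ap_9 (Y : Matrix (Fin 2) (Fin 4) ℂ) : tildeVec Y 9 = (Y 0 2).im := rfl
lemma tildeVec_ap_10 (Y : Matrix (Fin 2) (Fin 4) ℂ) : tildeVec Y 10 = (Y 1 2).re := rfl
lemma tildeVec_ap_11 (Y : Matrix (Fin 2) (Fin 4) ℂ) : tildeVec Y 11 = (Y 1 2).im := rfl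
lemma tildeVec_ap_12 (Y : Matrix (Fin 2) (Fin 4) ℂ) : tildeVec Y 12 = (Y 0 3).re := rfl
lemma tildeVec_ap_13 (Y : Matrix (Fin 2) (Fin 4) ℂ) : tildeVec Y 13 = (Y 0 3).im := rfl
lemma tildeVec_ap_14 (Y : Matrix (Fin 2) (Fin 4) ℂ) : tildeVec Y 14 = (Y 1 3).re := rfl
lemma tildeVec_ap_15 (Y : Matrix (Fin 2) (Fin 4) ℂ) : tildeVec Y 15 = (Y 1 3).im := rfl

/-! ### sOfReal lemmas -/

set_option maxHeartbeats 1000000 in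
lemma sOfReal_jinv (v : Fin 16 → ℝ) :
    sOfReal (jinv v) = fun k => Complex.I * sOfReal v k := by
  funext k
  fin_cases k <;>
    simp [sOfReal_ap_0, sOfReal_ap_1, sOfReal_ap_2, sOfReal_ap_3, sOfReal_ap_4,
      sOfReal_ap_5, sOfReal_ap_6, sOfReal_ap_7] <;>
    ring_nf <;> simp only [Complex.I_sq] <;> ring

set_option maxHeartbeats 1000000 in
lemma sOfReal_kinv (v : Fin 16 → ℝ) :
    sOfReal (kinv v) = ksig (sOfReal v) := by
  funext k; fin_cases k <;>
    simp [sOfReal_ap_0, sOfReal_ap_1, sOfReal_ap_2, sOfReal_ap_3, sOfReal_ap_4,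
      sOfReal_ap_5, sOfReal_ap_6, sOfReal_ap_7,
      ksig_0, ksig_1, ksig_2, ksig_3, ksig_4, ksig_5, ksig_6, ksig_7] <;>
    push_cast <;> ring

lemma sOfReal_smul (c : ℝ) (v : Fin 16 → ℝ) :
    sOfReal (c • v) = fun k => (c : ℂ) * sOfReal v k := by
  funext k; simp [sOfReal]; push_cast; ring

lemma sOfReal_add (v w : Fin 16 → ℝ) :
    sOfReal (v + w) = fun k => sOfReal v k + sOfReal w k := by
  funext k; simp [sOfReal]; push_cast; ring

/-! ### codeword linearity -/

set_option maxHeartbeats 1000000 in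
lemma codeword_smul (c : ℝ) (s : Fin 8 → ℂ) :
    codeword (fun k => (c : ℂ) * s k) = (c : ℂ) • codeword s := by
  ext i j
  fin_cases i <;> fin_cases j <;>
    simp [codeword, map_mul, Complex.conj_ofReal, Matrix.smul_apply, smul_eq_mul] <;> ring

set_option maxHeartbeats 1000000 in
lemma codeword_add (s t : Fin 8 → ℂ) :
    codeword (fun k => s k + t k) = codeword s + codeword t := by
  ext i j
  fin_cases i <;> fin_cases j <;>
    simp [codeword, map_add, Matrix.smul_apply, Matrix.add_apply, smul_eq_mul] <;> ring

/-! ### tildeVec lemmas -/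

set_option maxHeartbeats 1000000 in
lemma tildeVec_diagJ (Y : Matrix (Fin 2) (Fin 4) ℂ) :
    tildeVec (Y * Matrix.diagonal ![Complex.I, Complex.I, -Complex.I, -Complex.I]) =
      Jf (tildeVec Y) := by
  ext m
  fin_cases m <;>
    simp [tildeVec_ap_0, tildeVec_ap_1, tildeVec_ap_2, tildeVec_ap_3, tildeVec_ap_4, tildeVec_ap_5, tildeVec_ap_6, tildeVec_ap_7, tildeVec_ap_8, tildeVec_ap_9, tildeVec_ap_10, tildeVec_ap_11, tildeVec_ap_12, tildeVec_ap_13, tildeVec_ap_14, tildeVec_ap_15, Matrix.mul_diagonal, Complex.mul_re, Complex.mul_im] <;> ring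

set_option maxHeartbeats 1000000 in
lemma tildeVec_diagK (Y : Matrix (Fin 2) (Fin 4) ℂ) :
    tildeVec (Y * Matrix.diagonal ![(-1:ℂ), 1, -1, 1]) = Kf (tildeVec Y) := by
  ext m
  fin_cases m <;>
    simp [tildeVec_ap_0, tildeVec_ap_1, tildeVec_ap_2, tildeVec_ap_3, tildeVec_ap_4, tildeVec_ap_5, tildeVec_ap_6, tildeVec_ap_7, tildeVec_ap_8, tildeVec_ap_9, tildeVec_ap_10, tildeVec_ap_11, tildeVec_ap_12, tildeVec_ap_13, tildeVec_ap_14, tildeVec_ap_15, Matrix.mul_diagonal, Complex.mul_re, Complex.mul_im] <;> ring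

set_option maxHeartbeats 1000000 in
lemma tildeVec_smul (c : ℝ) (Y : Matrix (Fin 2) (Fin 4) ℂ) :
    tildeVec ((c : ℂ) • Y) = c • tildeVec Y := by
  ext m
  fin_cases m <;>
    simp [tildeVec_ap_0, tildeVec_ap_1, tildeVec_ap_2, tildeVec_ap_3, tildeVec_ap_4, tildeVec_ap_5, tildeVec_ap_6, tildeVec_ap_7, tildeVec_ap_8, tildeVec_ap_9, tildeVec_ap_10, tildeVec_ap_11, tildeVec_ap_12, tildeVec_ap_13, tildeVec_ap_14, tildeVec_ap_15, PiLp.smul_apply, Matrix.smul_apply, Complex.mul_re, Complex.mul_im,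
      Complex.ofReal_re, Complex.ofReal_im, smul_eq_mul] <;> ring

set_option maxHeartbeats 1000000 in
lemma tildeVec_add (Y Z : Matrix (Fin 2) (Fin 4) ℂ) :
    tildeVec (Y + Z) = tildeVec Y + tildeVec Z := by
  ext m
  fin_cases m <;> simp [tildeVec_ap_0, tildeVec_ap_1, tildeVec_ap_2, tildeVec_ap_3, tildeVec_ap_4, tildeVec_ap_5, tildeVec_ap_6, tildeVec_ap_7, tildeVec_ap_8, tildeVec_ap_9, tildeVec_ap_10, tildeVec_ap_11, tildeVec_ap_12, tildeVec_ap_13, tildeVec_ap_14, tildeVec_ap_15, PiLp.add_apply, Matrix.add_apply]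

/-! ### Master symmetry lemmas for the equivalent channel -/

lemma masterJ (H : Matrix (Fin 2) (Fin 4) ℂ) (v : Fin 16 → ℝ) :
    tildeVec (H * codeword (sOfReal (jinv v))) =
      Jf (tildeVec (H * codeword (sOfReal v))) := by
  rw [sOfReal_jinv, cwJ, ← Matrix.mul_assoc, tildeVec_diagJ]

lemma masterK (H : Matrix (Fin 2) (Fin 4) ℂ) (v : Fin 16 → ℝ) :
    tildeVec (H * codeword (sOfReal (kinv v))) =
      Real.sqrt 5 • Kf (tildeVec (H * codeword (sOfReal v))) := by
  rw [sOfReal_kinv, cwK, Matrix.mul_smul, ← Matrix.mul_assoc, tildeVec_smul, tildeVec_diagK]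

lemma masterSmul (H : Matrix (Fin 2) (Fin 4) ℂ) (c : ℝ) (v : Fin 16 → ℝ) :
    tildeVec (H * codeword (sOfReal (c • v))) =
      c • tildeVec (H * codeword (sOfReal v)) := by
  rw [sOfReal_smul, codeword_smul, Matrix.mul_smul, tildeVec_smul]

lemma masterAdd (H : Matrix (Fin 2) (Fin 4) ℂ) (v w : Fin 16 → ℝ) :
    tildeVec (H * codeword (sOfReal (v + w))) =
      tildeVec (H * codeword (sOfReal v)) + tildeVec (H * codeword (sOfReal w)) := by
  rw [sOfReal_add, codeword_add, Matrix.mul_add, tildeVec_add]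

/-! ### Action of the symmetries on the columns of the equivalent channel -/

set_option maxHeartbeats 1000000 in
lemma jinv_single (j : Fin 16) :
    jinv (Pi.single j 1) = jc j • (Pi.single (jp j) 1 : Fin 16 → ℝ) := by
  fin_cases j <;> (funext m; fin_cases m <;> simp [Pi.single_apply])

set_option maxHeartbeats 1000000 in
lemma kinv_single (j : Fin 16) :
    kinv (Pi.single j 1) = kc1 j • (Pi.single j 1 : Fin 16 → ℝ) + kc2 j • (Pi.single (kp j) 1 : Fin 16 → ℝ) := by
  fin_cases j <;> (funext m; fin_cases m <;> simp [Pi.single_apply])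

lemma hJ (H : Matrix (Fin 2) (Fin 4) ℂ) (j : Fin 16) :
    Jf (hcol H j) = jc j • hcol H (jp j) := by
  have h1 : hcol H j = tildeVec (H * codeword (sOfReal (Pi.single j 1))) := rfl
  have h2 : hcol H (jp j) = tildeVec (H * codeword (sOfReal (Pi.single (jp j) 1))) := rfl
  rw [h1, h2, ← masterJ, jinv_single, masterSmul]

lemma hK (H : Matrix (Fin 2) (Fin 4) ℂ) (j : Fin 16) :
    Real.sqrt 5 • Kf (hcol H j) = kc1 j • hcol H j + kc2 j • hcol H (kp j) := by
  have h1 : hcol H j = tildeVec (H * codeword (sOfReal (Pi.single j 1))) := rfl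
  have h2 : hcol H (kp j) = tildeVec (H * codeword (sOfReal (Pi.single (kp j) 1))) := rfl
  rw [h1, h2, ← masterK, kinv_single, masterAdd, masterSmul, masterSmul]

/-! ### Algebra of the output-side isometries -/

lemma Jf_add (x y : EuclideanSpace ℝ (Fin 16)) : Jf (x + y) = Jf x + Jf y := by
  ext m; fin_cases m <;>
    simp [PiLp.add_apply] <;> ring

lemma Jf_smul (c : ℝ) (x : EuclideanSpace ℝ (Fin 16)) : Jf (c • x) = c • Jf x := by
  ext m; fin_cases m <;>
    simp [PiLp.smul_apply, smul_eq_mul] <;> ring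

lemma Jf_zero : Jf (0 : EuclideanSpace ℝ (Fin 16)) = 0 := by
  ext m; fin_cases m <;> simp

lemma Jf_neg (x : EuclideanSpace ℝ (Fin 16)) : Jf (-x) = -Jf x := by
  ext m; fin_cases m <;> simp [PiLp.neg_apply]

lemma Kf_add (x y : EuclideanSpace ℝ (Fin 16)) : Kf (x + y) = Kf x + Kf y := by
  ext m; fin_cases m <;>
    simp [PiLp.add_apply] <;> ring

lemma Kf_smul (c : ℝ) (x : EuclideanSpace ℝ (Fin 16)) : Kf (c • x) = c • Kf x := by
  ext m; fin_cases m <;>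
    simp [PiLp.smul_apply, smul_eq_mul] <;> ring

lemma Kf_zero : Kf (0 : EuclideanSpace ℝ (Fin 16)) = 0 := by
  ext m; fin_cases m <;> simp

lemma JJ (x : EuclideanSpace ℝ (Fin 16)) : Jf (Jf x) = -x := by
  ext m; fin_cases m <;> simp [PiLp.neg_apply]

lemma KK (x : EuclideanSpace ℝ (Fin 16)) : Kf (Kf x) = x := by
  ext m; fin_cases m <;> simp

lemma JKcomm (x : EuclideanSpace ℝ (Fin 16)) : Jf (Kf x) = Kf (Jf x) := by
  ext m; fin_cases m <;> simp

def permJ : Equiv.Perm (Fin 16) :=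
  ⟨jp, jp, by decide, by decide⟩

lemma innJ (x y : EuclideanSpace ℝ (Fin 16)) : ⟪Jf x, Jf y⟫_ℝ = ⟪x, y⟫_ℝ := by
  simp only [PiLp.inner_apply, RCLike.inner_apply, conj_trivial]
  rw [← Equiv.sum_comp permJ (fun i => y i * x i)]
  refine Finset.sum_congr rfl fun m _ => ?_
  fin_cases m <;> simp [permJ] <;> ring

lemma innK (x y : EuclideanSpace ℝ (Fin 16)) : ⟪Kf x, Kf y⟫_ℝ = ⟪x, y⟫_ℝ := by
  simp only [PiLp.inner_apply, RCLike.inner_apply, conj_trivial]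
  refine Finset.sum_congr rfl fun m _ => ?_
  fin_cases m <;> simp <;> ring

lemma adjJ (x y : EuclideanSpace ℝ (Fin 16)) : ⟪Jf x, y⟫_ℝ = -⟪x, Jf y⟫_ℝ := by
  have h1 : ⟪Jf x, Jf (Jf y)⟫_ℝ = ⟪x, Jf y⟫_ℝ := innJ x (Jf y)
  rw [JJ, inner_neg_right] at h1
  linarith

lemma adjK (x y : EuclideanSpace ℝ (Fin 16)) : ⟪Kf x, y⟫_ℝ = ⟪x, Kf y⟫_ℝ := by
  have h1 : ⟪Kf x, Kf (Kf y)⟫_ℝ = ⟪x, Kf y⟫_ℝ := innK x (Kf y)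
  rwa [KK] at h1

lemma skewJ (x : EuclideanSpace ℝ (Fin 16)) : ⟪x, Jf x⟫_ℝ = 0 := by
  have h1 : ⟪Jf x, x⟫_ℝ = -⟪x, Jf x⟫_ℝ := adjJ x x
  have h2 : ⟪Jf x, x⟫_ℝ = ⟪x, Jf x⟫_ℝ := real_inner_comm _ _
  linarith

lemma skewJK (x : EuclideanSpace ℝ (Fin 16)) : ⟪x, Jf (Kf x)⟫_ℝ = 0 := by
  have h1 : ⟪Jf x, Kf x⟫_ℝ = -⟪x, Jf (Kf x)⟫_ℝ := adjJ x (Kf x)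
  have h2 : ⟪Kf (Jf x), x⟫_ℝ = ⟪Jf x, Kf x⟫_ℝ := adjK (Jf x) x
  have h3 : ⟪Kf (Jf x), x⟫_ℝ = ⟪x, Kf (Jf x)⟫_ℝ := real_inner_comm _ _
  rw [← JKcomm] at h2 h3
  linarith

/-! ### Gram–Schmidt facts -/

instance : WellFoundedLT (Fin 16) := inferInstance

open Submodule in
lemma orth_span (H : Matrix (Fin 2) (Fin 4) ℂ) {j : Fin 16} {x : EuclideanSpace ℝ (Fin 16)}
    (hx : x ∈ span ℝ (hcol H '' Set.Iio j)) :
    ⟪gramSchmidt ℝ (hcol H) j, x⟫_ℝ = 0 := by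
  rw [← span_gramSchmidt_Iio ℝ (hcol H) j] at hx
  induction hx using Submodule.span_induction with
  | mem x hx =>
    obtain ⟨i, hi, rfl⟩ := hx
    exact gramSchmidt_orthogonal ℝ _ (ne_of_gt hi)
  | zero => exact inner_zero_right _
  | add x y _ _ hx hy => rw [inner_add_right, hx, hy, add_zero]
  | smul c x _ hx => rw [real_inner_smul_right, hx, mul_zero]

open Submodule in
lemma diff_mem (H : Matrix (Fin 2) (Fin 4) ℂ) (j : Fin 16) :
    hcol H j - gramSchmidt ℝ (hcol H) j ∈ span ℝ (hcol H '' Set.Iio j) := by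
  rw [← span_gramSchmidt_Iio ℝ (hcol H) j]
  have h2 : hcol H j - gramSchmidt ℝ (hcol H) j = ∑ i ∈ Finset.Iio j,
      (ℝ ∙ gramSchmidt ℝ (hcol H) i).starProjection (hcol H j) := by
    conv_lhs => rw [gramSchmidt_def ℝ (hcol H) j]
    abel
  rw [h2]
  refine Submodule.sum_mem _ fun i hi => ?_
  have hmem : (ℝ ∙ gramSchmidt ℝ (hcol H) i).starProjection (hcol H j) ∈
      ℝ ∙ gramSchmidt ℝ (hcol H) i := Submodule.starProjection_apply_mem _ _
  have hle : (ℝ ∙ gramSchmidt ℝ (hcol H) i) ≤ span ℝ (gramSchmidt ℝ (hcol H) '' Set.Iio j) :=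
    (span_singleton_le_iff_mem _ _).2 <| subset_span ⟨i, Finset.mem_Iio.mp hi, rfl⟩
  exact hle hmem

open Submodule in
lemma Jf_mem (H : Matrix (Fin 2) (Fin 4) ℂ) {n : Fin 16} (hn : ∀ j : Fin 16, j < n → jp j < n)
    {x : EuclideanSpace ℝ (Fin 16)} (hx : x ∈ span ℝ (hcol H '' Set.Iio n)) :
    Jf x ∈ span ℝ (hcol H '' Set.Iio n) := by
  induction hx using Submodule.span_induction with
  | mem x hx =>
    obtain ⟨j, hj, rfl⟩ := hx
    rw [hJ H j]
    exact smul_mem _ _ (subset_span ⟨jp j, hn j hj, rfl⟩)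
  | zero => rw [Jf_zero]; exact zero_mem _
  | add x y _ _ hx hy => rw [Jf_add]; exact add_mem hx hy
  | smul c x _ hx => rw [Jf_smul]; exact smul_mem _ _ hx

open Submodule in
lemma Kf_mem (H : Matrix (Fin 2) (Fin 4) ℂ) {n : Fin 16} (hn : ∀ j : Fin 16, j < n → kp j < n)
    {x : EuclideanSpace ℝ (Fin 16)} (hx : x ∈ span ℝ (hcol H '' Set.Iio n)) :
    Kf x ∈ span ℝ (hcol H '' Set.Iio n) := by
  induction hx using Submodule.span_induction with
  | mem x hx =>
    obtain ⟨j, hj, rfl⟩ := hx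
    have h1 : Kf (hcol H j) = (Real.sqrt 5)⁻¹ •
        (kc1 j • hcol H j + kc2 j • hcol H (kp j)) := by
      rw [← hK H j, inv_smul_smul₀ (ne_of_gt sqrt5_pos)]
    rw [h1]
    exact smul_mem _ _ (add_mem (smul_mem _ _ (subset_span ⟨j, hj, rfl⟩))
      (smul_mem _ _ (subset_span ⟨kp j, hn j hj, rfl⟩)))
  | zero => rw [Kf_zero]; exact zero_mem _
  | add x y _ _ hx hy => rw [Kf_add]; exact add_mem hx hy
  | smul c x _ hx => rw [Kf_smul]; exact smul_mem _ _ hx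

end MIMO3D

namespace MIMO3D

lemma Jf_sub (x y : EuclideanSpace ℝ (Fin 16)) : Jf (x - y) = Jf x - Jf y := by
  rw [sub_eq_add_neg, Jf_add, Jf_neg, sub_eq_add_neg]

variable (H : Matrix (Fin 2) (Fin 4) ℂ)

lemma h13_eq : hcol H 13 = Jf (hcol H 12) := by
  rw [hJ H 12, show jc 12 = (1:ℝ) from rfl, show jp 12 = (13 : Fin 16) from rfl, one_smul]

lemma h15_eq : hcol H 15 = Jf (hcol H 14) := by
  rw [hJ H 14, show jc 14 = (1:ℝ) from rfl, show jp 14 = (15 : Fin 16) from rfl, one_smul]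

lemma h14_eq : (2:ℝ) • hcol H 14 = Real.sqrt 5 • Kf (hcol H 12) + hcol H 12 := by
  rw [hK H 12, show kc1 12 = (-1:ℝ) from rfl, show kc2 12 = (2:ℝ) from rfl,
    show kp 12 = (14 : Fin 16) from rfl]
  module

/-- R₄₄ entry (13,14) (1-based): ⟪q₁₃, h₁₄⟫ = 0. -/
lemma target1 : ⟪gramSchmidt ℝ (hcol H) 12, hcol H 13⟫_ℝ = 0 := by
  have hsplit : Jf (hcol H 12) = Jf (gramSchmidt ℝ (hcol H) 12) +
      Jf (hcol H 12 - gramSchmidt ℝ (hcol H) 12) := by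
    rw [← Jf_add, add_sub_cancel]
  rw [h13_eq, hsplit, inner_add_right, skewJ, zero_add]
  exact orth_span H (Jf_mem H (by decide) (diff_mem H 12))

lemma targetJK : ⟪gramSchmidt ℝ (hcol H) 12, Jf (Kf (hcol H 12))⟫_ℝ = 0 := by
  have hsplit : Jf (Kf (hcol H 12)) = Jf (Kf (gramSchmidt ℝ (hcol H) 12)) +
      Jf (Kf (hcol H 12 - gramSchmidt ℝ (hcol H) 12)) := by
    rw [← Jf_add, ← Kf_add, add_sub_cancel]
  rw [hsplit, inner_add_right, skewJK, zero_add]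
  exact orth_span H (Jf_mem H (by decide) (Kf_mem H (by decide) (diff_mem H 12)))

/-- R₄₄ entry (13,16): ⟪q₁₃, h₁₆⟫ = 0. -/
lemma target2 : ⟪gramSchmidt ℝ (hcol H) 12, hcol H 15⟫_ℝ = 0 := by
  have h2 : (2:ℝ) • hcol H 15 = Real.sqrt 5 • Jf (Kf (hcol H 12)) + hcol H 13 := by
    rw [h15_eq, ← Jf_smul, h14_eq, Jf_add, Jf_smul, ← h13_eq]
  have h3 : ⟪gramSchmidt ℝ (hcol H) 12, (2:ℝ) • hcol H 15⟫_ℝ = 0 := by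
    rw [h2, inner_add_right, real_inner_smul_right, targetJK, target1, mul_zero, add_zero]
  rw [real_inner_smul_right] at h3
  linarith

lemma g13_eq : gramSchmidt ℝ (hcol H) 13 = Jf (gramSchmidt ℝ (hcol H) 12) := by
  set g12 := gramSchmidt ℝ (hcol H) 12 with hg12
  set g13 := gramSchmidt ℝ (hcol H) 13 with hg13
  have hmono : Submodule.span ℝ (hcol H '' Set.Iio (12 : Fin 16)) ≤
      Submodule.span ℝ (hcol H '' Set.Iio (13 : Fin 16)) :=
    Submodule.span_mono (Set.image_mono fun x hx => lt_of_lt_of_le hx (by decide : (12:Fin 16) ≤ 13))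
  have horth : ∀ x ∈ Submodule.span ℝ (hcol H '' Set.Iio (13 : Fin 16)),
      ⟪Jf g12, x⟫_ℝ = 0 := by
    intro x hx
    induction hx using Submodule.span_induction with
    | mem x hx =>
      obtain ⟨j, hj, rfl⟩ := hx
      rw [adjJ, hJ H j, real_inner_smul_right]
      by_cases hj12 : j = 12
      · subst hj12
        rw [show jp 12 = (13 : Fin 16) from rfl, target1 H, mul_zero, neg_zero]
      · have hjv : (j : ℕ) < 13 := hj
        have hjv' : (j : ℕ) ≠ 12 := fun h => hj12 (Fin.ext h)
        have hlt : j < (12 : Fin 16) := by rw [Fin.lt_def]; omega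
        have hplt : jp j < (12 : Fin 16) :=
          (by decide : ∀ i : Fin 16, i < 12 → jp i < 12) j hlt
        rw [orth_span H (Submodule.subset_span ⟨jp j, hplt, rfl⟩), mul_zero, neg_zero]
    | zero => exact inner_zero_right _
    | add x y _ _ hx hy => rw [inner_add_right, hx, hy, add_zero]
    | smul c x _ hx => rw [real_inner_smul_right, hx, mul_zero]
  have hdmem : g13 - Jf g12 ∈ Submodule.span ℝ (hcol H '' Set.Iio (13 : Fin 16)) := by
    have e1 : g13 - Jf g12 =
        Jf (hcol H 12 - g12) - (hcol H 13 - g13) := by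
      rw [Jf_sub, ← h13_eq]; abel
    rw [e1]
    exact sub_mem (hmono (Jf_mem H (by decide) (diff_mem H 12))) (diff_mem H 13)
  have hzero : ⟪g13 - Jf g12, g13 - Jf g12⟫_ℝ = 0 := by
    rw [inner_sub_left, orth_span H hdmem, horth _ hdmem, sub_zero]
  have := inner_self_eq_zero.mp hzero
  rw [sub_eq_zero] at this
  exact this

/-- R₄₄ entry (14,15): ⟪q₁₄, h₁₅⟫ = 0. -/
lemma target3 : ⟪gramSchmidt ℝ (hcol H) 13, hcol H 14⟫_ℝ = 0 := by
  rw [g13_eq]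
  set g12 := gramSchmidt ℝ (hcol H) 12 with hg12
  have a1 : ⟪Jf g12, Kf (hcol H 12)⟫_ℝ = 0 := by
    rw [adjJ, targetJK, neg_zero]
  have a2 : ⟪Jf g12, hcol H 12⟫_ℝ = 0 := by
    rw [adjJ, ← h13_eq, target1, neg_zero]
  have h1 : ⟪Jf g12, (2:ℝ) • hcol H 14⟫_ℝ = 0 := by
    rw [h14_eq, inner_add_right, real_inner_smul_right, a1, a2, mul_zero, add_zero]
  rw [real_inner_smul_right] at h1
  linarith

/-- R₄₄ entry (15,16): ⟪q₁₅, h₁₆⟫ = 0. -/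
lemma target4 : ⟪gramSchmidt ℝ (hcol H) 14, hcol H 15⟫_ℝ = 0 := by
  have hsplit : Jf (hcol H 14) = Jf (gramSchmidt ℝ (hcol H) 14) +
      Jf (hcol H 14 - gramSchmidt ℝ (hcol H) 14) := by
    rw [← Jf_add, add_sub_cancel]
  rw [h15_eq, hsplit, inner_add_right, skewJ, zero_add]
  exact orth_span H (Jf_mem H (by decide) (diff_mem H 14))

lemma qvec_eq (j : Fin 16) :
    qvec H j = (‖gramSchmidt ℝ (hcol H) j‖ : ℝ)⁻¹ • gramSchmidt ℝ (hcol H) j := rfl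

end MIMO3D
/-- The fourth diagonal block R₄₄ of R has the same zero pattern as
R₁₁: ⟨q₁₃,h₁₄⟩ = ⟨q₁₃,h₁₆⟩ = ⟨q₁₄,h₁₅⟩ = ⟨q₁₅,h₁₆⟩ = 0 (paper's 1-based indices;
0-indexed here as q₁₂,…,q₁₅ and h₁₂,…,h₁₅). -/
theorem stmt5 (H : Matrix (Fin 2) (Fin 4) ℂ) (hLI : LinearIndependent ℝ (hcol H)) :
    ⟪qvec H 12, hcol H 13⟫_ℝ = 0 ∧ ⟪qvec H 12, hcol H 15⟫_ℝ = 0 ∧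
    ⟪qvec H 13, hcol H 14⟫_ℝ = 0 ∧ ⟪qvec H 14, hcol H 15⟫_ℝ = 0 := by
  refine ⟨?_, ?_, ?_, ?_⟩
  · rw [qvec_eq, real_inner_smul_left, target1, mul_zero]
  · rw [qvec_eq, real_inner_smul_left, target2, mul_zero]
  · rw [qvec_eq, real_inner_smul_left, target3, mul_zero]
  · rw [qvec_eq, real_inner_smul_left, target4, mul_zero]
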